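/- Let 𝒟 be the uniform probability distribution on B₋ ∪ B₊ ⊆ ℝ², where B₋ and B₊ are the closed unit discs centered at (−2,0) and (2,0) respectively, with ground truth h(x) = −1 for x ∈ B₋ and h(x) = +1 for x ∈ B₊. Define the classifier f : ℝ² → {-1,1} by f(x) = −1 if x ∈ B₋ and f(x) = +1 otherwise. Then R(f) = 0; yet for every σ ≥ 3/2 the Gaussian randomized-smoothed classifier satisfies ℙ_{δ∼𝒩(0,σ²I₂)}(f(x+δ) = +1) > 1/2 for every x ∈ ℝ², hence g(x) := argmax_{c∈{-1,1}} ℙ_{δ∼𝒩(0,σ²I₂)}(f(x+δ) = c) equals +1 everywhere and R(g) = 1/2. -/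

import Mathlib

open MeasureTheory Metric Set
open scoped ENNReal NNReal Classical

noncomputable section

/-- The Euclidean plane `ℝ²` with the `ℓ₂` metric. -/
abbrev Euc2 := EuclideanSpace ℝ (Fin 2)

/-- The (standard) risk `R(f) = ℙ_{X ∼ 𝒟}(f(X) ≠ h(X))`. -/
def risk (𝒟 : Measure Euc2) (h f : Euc2 → ℝ) : ℝ≥0∞ :=
  𝒟 {x | f x ≠ h x}

/-- The closed unit disc `B₋` centered at `(-2, 0)`. -/
def discNeg : Set Euc2 := closedBall (WithLp.toLp 2 ![(-2 : ℝ), 0] : Euc2) 1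

/-- The closed unit disc `B₊` centered at `(2, 0)`. -/
def discPos : Set Euc2 := closedBall (WithLp.toLp 2 ![(2 : ℝ), 0] : Euc2) 1

/-- The uniform probability distribution on `B₋ ∪ B₊`. -/
def discMeasure : Measure Euc2 :=
  (volume (discNeg ∪ discPos))⁻¹ • volume.restrict (discNeg ∪ discPos)

/-- The ground truth: `-1` on `B₋`, `+1` elsewhere (in particular on `B₊`). -/
def hGT (x : Euc2) : ℝ := if x ∈ discNeg then -1 else 1

/-- The classifier `f`: `-1` on `B₋`, `+1` everywhere else. -/
def fCl (x : Euc2) : ℝ := if x ∈ discNeg then -1 else 1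

/-- The centered Gaussian measure `𝒩(0, σ²I₂)` on `ℝ²`. -/
def gauss2 (σ : ℝ) : Measure Euc2 :=
  (Measure.pi fun _ : Fin 2 =>
    ProbabilityTheory.gaussianReal 0 (Real.toNNReal (σ ^ 2))).map
      (EuclideanSpace.equiv (Fin 2) ℝ).symm

/-! ### Auxiliary lemmas -/

lemma gauss1_le {v : ℝ≥0} (hv : v ≠ 0) :
    ProbabilityTheory.gaussianReal 0 v
      ≤ (ENNReal.ofReal ((Real.sqrt (2 * Real.pi * v))⁻¹)) • (volume : Measure ℝ) := by
  rw [ProbabilityTheory.gaussianReal_of_var_ne_zero _ hv, ← withDensity_const]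
  refine withDensity_mono (Filter.Eventually.of_forall fun x => ?_)
  unfold ProbabilityTheory.gaussianPDF
  refine ENNReal.ofReal_le_ofReal ?_
  rw [ProbabilityTheory.gaussianPDFReal_def]
  have hv' : (0:ℝ) < v := by positivity
  have h1 : Real.exp (-(x - 0) ^ 2 / (2 * v)) ≤ 1 := by
    rw [Real.exp_le_one_iff]
    exact div_nonpos_of_nonpos_of_nonneg (neg_nonpos.mpr (sq_nonneg _)) (by positivity)
  calc (Real.sqrt (2 * Real.pi * v))⁻¹ * Real.exp (-(x - 0) ^ 2 / (2 * v))
      ≤ (Real.sqrt (2 * Real.pi * v))⁻¹ * 1 :=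
        mul_le_mul_of_nonneg_left h1 (by positivity)
    _ = _ := by ring

lemma prod_le_smul {μ ν : Measure ℝ} [SFinite μ] [SFinite ν] {c d : ℝ≥0∞}
    (hμ : μ ≤ c • (volume : Measure ℝ)) (hν : ν ≤ d • (volume : Measure ℝ)) :
    μ.prod ν ≤ (c * d) • ((volume : Measure ℝ).prod volume) := by
  rw [Measure.le_iff]
  intro s hs
  calc μ.prod ν s = ∫⁻ x, ν (Prod.mk x ⁻¹' s) ∂μ := Measure.prod_apply hs
    _ ≤ ∫⁻ x, d * volume (Prod.mk x ⁻¹' s) ∂μ := by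
        refine lintegral_mono fun x => ?_
        simpa using Measure.le_iff'.mp hν (Prod.mk x ⁻¹' s)
    _ = d * ∫⁻ x, volume (Prod.mk x ⁻¹' s) ∂μ :=
        lintegral_const_mul d (measurable_measure_prodMk_left hs)
    _ ≤ d * ∫⁻ x, volume (Prod.mk x ⁻¹' s) ∂(c • volume) :=
        mul_le_mul_right (lintegral_mono' hμ le_rfl) d
    _ = d * (c * ∫⁻ x, volume (Prod.mk x ⁻¹' s) ∂volume) := by rw [lintegral_smul_measure, smul_eq_mul]
    _ = (c * d) * ((volume : Measure ℝ).prod volume) s := by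
        rw [Measure.prod_apply hs]; ring
    _ = _ := rfl

lemma pi2_le {μ : Measure ℝ} [SigmaFinite μ] {c : ℝ≥0∞} (h : μ ≤ c • (volume : Measure ℝ)) :
    Measure.pi (fun _ : Fin 2 => μ) ≤ (c * c) • (volume : Measure (Fin 2 → ℝ)) := by
  rw [Measure.le_iff]
  intro s hs
  set e := MeasurableEquiv.piFinTwo (fun _ : Fin 2 => ℝ) with he
  have hp := (measurePreserving_piFinTwo (fun _ : Fin 2 => μ)).2
  have hv := (measurePreserving_piFinTwo (fun _ : Fin 2 => (volume : Measure ℝ))).2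
  have hset : e ⁻¹' (e.symm ⁻¹' s) = s := by ext y; simp
  have hms : MeasurableSet (e.symm ⁻¹' s) := e.symm.measurable hs
  have h1 : Measure.pi (fun _ : Fin 2 => μ) s = (μ.prod μ) (e.symm ⁻¹' s) := by
    rw [← hp, MeasurableEquiv.map_apply, hset]
  have h2 : (volume : Measure (Fin 2 → ℝ)) s
      = ((volume : Measure ℝ).prod volume) (e.symm ⁻¹' s) := by
    have hvol : (volume : Measure (Fin 2 → ℝ))
        = Measure.pi (fun _ : Fin 2 => (volume : Measure ℝ)) := rfl
    rw [hvol, ← hv, MeasurableEquiv.map_apply, hset]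
  rw [h1]
  calc (μ.prod μ) (e.symm ⁻¹' s)
      ≤ ((c*c) • ((volume : Measure ℝ).prod volume)) (e.symm ⁻¹' s) :=
        Measure.le_iff'.mp (prod_le_smul h h) _
    _ = (c*c) * (volume : Measure (Fin 2 → ℝ)) s := by rw [h2]; rfl
    _ = _ := rfl

instance gauss2_prob (σ : ℝ) : IsProbabilityMeasure (gauss2 σ) :=
  Measure.isProbabilityMeasure_map
    ((EuclideanSpace.equiv (Fin 2) ℝ).symm.continuous.measurable.aemeasurable)

lemma euc2_volume_closedBall (y : Euc2) :
    (volume : Measure Euc2) (closedBall y 1) = ENNReal.ofReal Real.pi := by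
  rw [EuclideanSpace.volume_closedBall]
  simp [Real.Gamma_two]
  norm_num [Real.sq_sqrt Real.pi_pos.le]

lemma gauss2_ball_lt {σ : ℝ} (hσ : 3/2 ≤ σ) (y : Euc2) :
    gauss2 σ (closedBall y 1) < 1/2 := by
  have hσ0 : (0:ℝ) < σ := lt_of_lt_of_le (by norm_num) hσ
  set v : ℝ≥0 := Real.toNNReal (σ ^ 2) with hvdef
  have hv : v ≠ 0 := by
    simp [hvdef, Real.toNNReal_eq_zero, not_le]
    positivity
  have hvr : (v : ℝ) = σ ^ 2 := Real.coe_toNNReal _ (by positivity)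
  have hmeas : MeasurableSet (closedBall y 1) := measurableSet_closedBall
  have hmap : gauss2 σ (closedBall y 1)
      = (Measure.pi fun _ : Fin 2 => ProbabilityTheory.gaussianReal 0 v)
          ((EuclideanSpace.equiv (Fin 2) ℝ).symm ⁻¹' closedBall y 1) :=
    Measure.map_apply ((EuclideanSpace.equiv (Fin 2) ℝ).symm.continuous.measurable) hmeas
  set C : ℝ≥0∞ := ENNReal.ofReal ((Real.sqrt (2 * Real.pi * v))⁻¹) with hC
  have hle := pi2_le (μ := ProbabilityTheory.gaussianReal 0 v) (gauss1_le hv)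
  have hvolpre : (volume : Measure (Fin 2 → ℝ))
      ((EuclideanSpace.equiv (Fin 2) ℝ).symm ⁻¹' closedBall y 1)
      = volume (closedBall y 1) := by
    have h := (EuclideanSpace.volume_preserving_symm_measurableEquiv_toLp (ι := Fin 2)).symm
    have heq : ⇑(EuclideanSpace.equiv (Fin 2) ℝ).symm
        = ⇑(MeasurableEquiv.toLp 2 (Fin 2 → ℝ)).symm.symm := rfl
    rw [heq]
    exact h.measure_preimage hmeas.nullMeasurableSet
  have hCC : C * C = ENNReal.ofReal ((2 * Real.pi * σ^2)⁻¹) := by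
    rw [hC, ← ENNReal.ofReal_mul (by positivity)]
    congr 1
    rw [← mul_inv, Real.mul_self_sqrt (by positivity), hvr]
  calc gauss2 σ (closedBall y 1)
      ≤ (C * C) * (volume : Measure (Fin 2 → ℝ))
          ((EuclideanSpace.equiv (Fin 2) ℝ).symm ⁻¹' closedBall y 1) := by
        rw [hmap, hC]
        exact Measure.le_iff'.mp hle _
    _ = ENNReal.ofReal ((2 * Real.pi * σ^2)⁻¹) * ENNReal.ofReal Real.pi := by
        rw [hvolpre, euc2_volume_closedBall, hCC]
    _ = ENNReal.ofReal ((2 * Real.pi * σ^2)⁻¹ * Real.pi) := by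
        rw [← ENNReal.ofReal_mul (by positivity)]
    _ < 1/2 := by
        have hπ := Real.pi_pos
        have h1 : (2 * Real.pi * σ^2)⁻¹ * Real.pi = (2 * σ^2)⁻¹ := by
          field_simp
        rw [h1]
        have h2 : (2 * σ^2)⁻¹ < 1/2 := by
          rw [inv_lt_comm₀ (by positivity) (by norm_num)]
          nlinarith
        have h3 : (1:ℝ≥0∞)/2 = ENNReal.ofReal (1/2) := by
          rw [ENNReal.ofReal_div_of_pos (by norm_num)]; norm_num
        rw [h3]
        exact ENNReal.ofReal_lt_ofReal_iff (by norm_num) |>.mpr h2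

lemma setOne_eq (x : Euc2) :
    {δ : Euc2 | fCl (x + δ) = 1} = {δ : Euc2 | x + δ ∈ discNeg}ᶜ := by
  ext δ
  by_cases h : x + δ ∈ discNeg <;> simp [fCl, h] <;> norm_num

lemma setNegOne_eq (x : Euc2) :
    {δ : Euc2 | fCl (x + δ) = -1} = {δ : Euc2 | x + δ ∈ discNeg} := by
  ext δ
  by_cases h : x + δ ∈ discNeg <;> simp [fCl, h] <;> norm_num

def ctrNeg : Euc2 := WithLp.toLp 2 ![(-2 : ℝ), 0]

def ctrPos : Euc2 := WithLp.toLp 2 ![(2 : ℝ), 0]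

lemma discNeg_eq : discNeg = closedBall ctrNeg 1 := rfl

lemma discPos_eq : discPos = closedBall ctrPos 1 := rfl

lemma setMem_eq (x : Euc2) :
    {δ : Euc2 | x + δ ∈ discNeg} = closedBall (ctrNeg - x) 1 := by
  ext δ
  rw [discNeg_eq]
  simp only [mem_setOf_eq, mem_closedBall]
  have hd : dist (x + δ) ctrNeg = dist δ (ctrNeg - x) := by
    conv_lhs => rw [show ctrNeg = x + (ctrNeg - x) by rw [add_sub_cancel]]
    exact dist_add_left x _ _
  rw [hd]

lemma gauss2_half_lt {σ : ℝ} (hσ : 3/2 ≤ σ) (x : Euc2) :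
    (1 : ℝ≥0∞) / 2 < gauss2 σ {δ | fCl (x + δ) = 1} := by
  have hball : MeasurableSet {δ : Euc2 | x + δ ∈ discNeg} := by
    rw [setMem_eq]; exact measurableSet_closedBall
  have hS : MeasurableSet {δ : Euc2 | fCl (x + δ) = 1} := by
    rw [setOne_eq]; exact hball.compl
  have hlt : gauss2 σ {δ : Euc2 | x + δ ∈ discNeg} < 1/2 := by
    rw [setMem_eq]; exact gauss2_ball_lt hσ _
  have hsum := measure_add_measure_compl (μ := gauss2 σ) hS
  rw [measure_univ] at hsum
  by_contra hcon
  push_neg at hcon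
  have hcompl : {δ : Euc2 | fCl (x + δ) = 1}ᶜ = {δ : Euc2 | x + δ ∈ discNeg} := by
    rw [setOne_eq, compl_compl]
  rw [hcompl] at hsum
  have hthis : (1:ℝ≥0∞) < 1/2 + 1/2 := by
    calc (1:ℝ≥0∞) = _ := hsum.symm
      _ < 1/2 + 1/2 :=
        ENNReal.add_lt_add_of_le_of_lt (measure_ne_top _ _) hcon hlt
  rw [ENNReal.add_halves] at hthis
  exact lt_irrefl _ hthis

lemma dist_centers : dist ctrNeg ctrPos = 4 := by
  have h : dist ctrNeg ctrPos
      = Real.sqrt (∑ i : Fin 2, dist (ctrNeg i) (ctrPos i) ^ 2) :=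
    EuclideanSpace.dist_eq _ _
  rw [h]
  have h2 : ∑ i : Fin 2, dist (ctrNeg i) (ctrPos i) ^ 2 = 16 := by
    simp [Fin.sum_univ_two, ctrNeg, ctrPos, Real.dist_eq]
    norm_num
  rw [h2, show (16:ℝ) = 4^2 by norm_num, Real.sqrt_sq (by norm_num : (0:ℝ) ≤ 4)]

lemma discs_disjoint : Disjoint discNeg discPos := by
  rw [discNeg_eq, discPos_eq]
  refine closedBall_disjoint_closedBall ?_
  rw [dist_centers]; norm_num

lemma measurable_discNeg : MeasurableSet discNeg := by
  rw [discNeg_eq]; exact measurableSet_closedBall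

lemma measurable_discPos : MeasurableSet discPos := by
  rw [discPos_eq]; exact measurableSet_closedBall

lemma discMeasure_discNeg : discMeasure discNeg = 1/2 := by
  have hvN : volume discNeg = ENNReal.ofReal Real.pi := by
    rw [discNeg_eq]; exact euc2_volume_closedBall _
  have hvP : volume discPos = ENNReal.ofReal Real.pi := by
    rw [discPos_eq]; exact euc2_volume_closedBall _
  have hU : volume (discNeg ∪ discPos) = ENNReal.ofReal Real.pi + ENNReal.ofReal Real.pi := by
    rw [measure_union discs_disjoint measurable_discPos, hvN, hvP]
  have hres : volume.restrict (discNeg ∪ discPos) discNeg = ENNReal.ofReal Real.pi := by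
    rw [Measure.restrict_apply measurable_discNeg,
      inter_eq_self_of_subset_left subset_union_left, hvN]
  rw [discMeasure, Measure.smul_apply, smul_eq_mul, hres, hU]
  set a : ℝ≥0∞ := ENNReal.ofReal Real.pi with ha
  have ha0 : a ≠ 0 := by
    simp [ha, ENNReal.ofReal_eq_zero, not_le]; exact Real.pi_pos
  have hat : a ≠ ⊤ := ENNReal.ofReal_ne_top
  rw [← two_mul, ENNReal.mul_inv (Or.inr hat) (Or.inr ha0), mul_assoc,
    ENNReal.inv_mul_cancel ha0 hat, mul_one, one_div]

/-- The two-discs example: the classifier `f` has risk `0`; yet for every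
`σ ≥ 3/2`, Gaussian randomized smoothing with parameter `σ` satisfies
`ℙ_{δ∼𝒩(0,σ²I₂)}(f(x+δ) = +1) > 1/2` for every `x ∈ ℝ²`, hence any smoothed
classifier `g(x) = argmax_c ℙ_{δ∼𝒩(0,σ²I₂)}(f(x+δ) = c)` is identically `+1`
and has risk `1/2`. -/
theorem stmt18 :
    risk discMeasure hGT fCl = 0 ∧
    ∀ σ : ℝ, 3 / 2 ≤ σ →
      (∀ x : Euc2, (1 : ℝ≥0∞) / 2 < gauss2 σ {δ | fCl (x + δ) = 1}) ∧
      ∀ g : Euc2 → ℝ,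
        (∀ x : Euc2, (g x = 1 ∨ g x = -1) ∧
          ∀ c : ℝ, c = 1 ∨ c = -1 →
            gauss2 σ {δ | fCl (x + δ) = c} ≤ gauss2 σ {δ | fCl (x + δ) = g x}) →
        (∀ x, g x = 1) ∧ risk discMeasure hGT g = 1 / 2 := by
  constructor
  · have h : {x : Euc2 | fCl x ≠ hGT x} = ∅ := by
      ext x; simp [fCl, hGT]
    rw [risk, h, measure_empty]
  · intro σ hσ
    have hkey : ∀ x : Euc2, (1 : ℝ≥0∞) / 2 < gauss2 σ {δ | fCl (x + δ) = 1} :=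
      fun x => gauss2_half_lt (by linarith) x
    refine ⟨hkey, fun g hg => ?_⟩
    have hg1 : ∀ x, g x = 1 := by
      intro x
      obtain ⟨hor, hmax⟩ := hg x
      rcases hor with h1 | h1
      · exact h1
      · exfalso
        have hle := hmax 1 (Or.inl rfl)
        rw [h1] at hle
        have hlt : gauss2 σ {δ : Euc2 | fCl (x + δ) = -1} < 1/2 := by
          rw [setNegOne_eq, setMem_eq]
          exact gauss2_ball_lt (by linarith) _
        exact absurd (lt_of_le_of_lt hle hlt) (not_lt.mpr (hkey x).le)
    refine ⟨hg1, ?_⟩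
    have hset : {x : Euc2 | g x ≠ hGT x} = discNeg := by
      ext x
      rw [mem_setOf_eq, hg1 x]
      by_cases h : x ∈ discNeg <;> simp [hGT, h] <;> norm_num
    rw [risk, hset]
    exact discMeasure_discNeg

end
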